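/- arXiv:2601.16361 — 3 statements merged into one kernel-verified Lean document; each statement's English description precedes it below -/
import Mathlib

section
/- There exists a bitopological space (X, τ⁺, τ⁻) that is antisymmetrically connected but whose join topology τ∨ = τ⁺ ⊔ τ⁻ is disconnected. Concretely: X = {0,1,2}, τ⁺ = {∅, X}, τ⁻ = {∅, {2}, {0,1}, X} gives τ∨ = τ⁻ disconnected, while X admits no partition into a nonempty τ⁺-open set and a nonempty τ⁻-open set. -/
open Set TopologicalSpace

/-- The backward topology on `{0,1,2}`: generated by `{2}` and `{0,1}`. -/
def tmEx : TopologicalSpace (Fin 3) :=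
  generateFrom {({2} : Set (Fin 3)), ({0, 1} : Set (Fin 3))}

/-- The bitopological space `X = {0,1,2}` with `τ⁺` indiscrete and
`τ⁻ = {∅, {2}, {0,1}, X}` is antisymmetrically connected, yet its join topology
(`⊓` in Mathlib's order on topologies) is disconnected. -/
theorem antisym_connected_but_join_disconnected :
    (¬ ∃ A B : Set (Fin 3), A.Nonempty ∧ B.Nonempty ∧
        (⊤ : TopologicalSpace (Fin 3)).IsOpen A ∧ tmEx.IsOpen B ∧
        Disjoint A B ∧ A ∪ B = univ) ∧
    (∃ U V : Set (Fin 3), U.Nonempty ∧ V.Nonempty ∧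
        ((⊤ : TopologicalSpace (Fin 3)) ⊓ tmEx).IsOpen U ∧
        ((⊤ : TopologicalSpace (Fin 3)) ⊓ tmEx).IsOpen V ∧
        Disjoint U V ∧ U ∪ V = univ) := by
  constructor
  · rintro ⟨A, B, hA, hB, hAop, _, hdisj, -⟩
    rcases (TopologicalSpace.isOpen_top_iff A).mp hAop with rfl | rfl
    · exact hA.ne_empty rfl
    · obtain ⟨b, hb⟩ := hB
      exact (hdisj.ne_of_mem (mem_univ b) hb) rfl
  · refine ⟨{2}, {0, 1}, ⟨2, rfl⟩, ⟨0, by simp⟩, ?_, ?_, ?_, ?_⟩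
    · exact inf_le_right (a := (⊤ : TopologicalSpace (Fin 3))) (b := tmEx)
        _ (TopologicalSpace.GenerateOpen.basic _ (by simp))
    · exact inf_le_right (a := (⊤ : TopologicalSpace (Fin 3))) (b := tmEx)
        _ (TopologicalSpace.GenerateOpen.basic _ (by simp))
    · rw [Set.disjoint_left]; intro x hx; simp at hx; subst hx; decide
    · ext x; fin_cases x <;> simp
end

section
/- Let (X, τ⁺, τ⁻) be a bitopological space and let A, B ⊆ X be antisymmetrically connected subsets with A ∩ B ≠ ∅. Then A ∪ B is antisymmetrically connected. -/
open Set

/-- A subset `C` is antisymmetrically connected w.r.t. a bitopology `(tp, tm)` if it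
cannot be partitioned into two nonempty disjoint sets, one relatively `tp`-open in `C`
and the other relatively `tm`-open in `C`. -/
def AntisymConn {X : Type*} (tp tm : TopologicalSpace X) (C : Set X) : Prop :=
  ¬ ∃ H K : Set X, H.Nonempty ∧ K.Nonempty ∧ Disjoint H K ∧ C = H ∪ K ∧
    (∃ O : Set X, tp.IsOpen O ∧ H = C ∩ O) ∧ (∃ O : Set X, tm.IsOpen O ∧ K = C ∩ O)

/-- The union of two antisymmetrically connected subsets with a common point is
antisymmetrically connected. -/
theorem antisymConn_union {X : Type*}
    (tp tm : TopologicalSpace X) (A B : Set X)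
    (hA : AntisymConn tp tm A) (hB : AntisymConn tp tm B)
    (hAB : (A ∩ B).Nonempty) :
    AntisymConn tp tm (A ∪ B) := by
  rintro ⟨H, K, hHne, hKne, hdisj, hunion, ⟨O1, hO1, hH⟩, ⟨O2, hO2, hK⟩⟩
  obtain ⟨x, hxA, hxB⟩ := hAB
  have key : ∀ C : Set X, AntisymConn tp tm C → C ⊆ A ∪ B → C ⊆ H ∨ C ⊆ K := by
    intro C hC hsub
    by_contra hcon
    push_neg at hcon
    obtain ⟨hnH, hnK⟩ := hcon
    have hsubHK : C ⊆ H ∪ K := hunion ▸ hsub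
    obtain ⟨a, haC, haH⟩ := not_subset.mp hnH
    obtain ⟨b, hbC, hbK⟩ := not_subset.mp hnK
    have haK : a ∈ K := (hsubHK haC).resolve_left haH
    have hbH : b ∈ H := (hsubHK hbC).resolve_right hbK
    apply hC
    refine ⟨C ∩ H, C ∩ K, ⟨b, hbC, hbH⟩, ⟨a, haC, haK⟩,
      hdisj.mono inter_subset_right inter_subset_right, ?_, ⟨O1, hO1, ?_⟩, ⟨O2, hO2, ?_⟩⟩
    · ext y
      constructor
      · intro hy
        rcases hsubHK hy with h | h
        · exact Or.inl ⟨hy, h⟩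
        · exact Or.inr ⟨hy, h⟩
      · rintro (⟨hy, _⟩ | ⟨hy, _⟩) <;> exact hy
    · rw [hH]
      ext y
      exact ⟨fun ⟨h1, _, h3⟩ => ⟨h1, h3⟩, fun ⟨h1, h2⟩ => ⟨h1, hsub h1, h2⟩⟩
    · rw [hK]
      ext y
      exact ⟨fun ⟨h1, _, h3⟩ => ⟨h1, h3⟩, fun ⟨h1, h2⟩ => ⟨h1, hsub h1, h2⟩⟩
  have hAcase := key A hA subset_union_left
  have hBcase := key B hB subset_union_right
  -- x ∈ A ∩ B forces A and B to the same side
  have hxside : (A ⊆ H ∧ B ⊆ H) ∨ (A ⊆ K ∧ B ⊆ K) := by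
    rcases hAcase with hA' | hA' <;> rcases hBcase with hB' | hB'
    · exact Or.inl ⟨hA', hB'⟩
    · exact absurd (hdisj.ne_of_mem (hA' hxA) (hB' hxB)) (by simp)
    · exact absurd (hdisj.ne_of_mem (hB' hxB) (hA' hxA)) (by simp)
    · exact Or.inr ⟨hA', hB'⟩
  rcases hxside with ⟨h1, h2⟩ | ⟨h1, h2⟩
  · obtain ⟨y, hy⟩ := hKne
    have : y ∈ A ∪ B := hunion ▸ Or.inr hy
    have : y ∈ H := this.elim (fun h => h1 h) (fun h => h2 h)
    exact hdisj.ne_of_mem this hy rfl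
  · obtain ⟨y, hy⟩ := hHne
    have : y ∈ A ∪ B := hunion ▸ Or.inl hy
    have : y ∈ K := this.elim (fun h => h1 h) (fun h => h2 h)
    exact hdisj.ne_of_mem hy this rfl
end

section
/- Let f : X → Y where X carries topologies τ⁺_X, τ⁻_X and Y carries topologies τ⁺_Y, τ⁻_Y. Suppose f is continuous both as a map (X,τ⁺_X) → (Y,τ⁺_Y) and as a map (X,τ⁻_X) → (Y,τ⁻_Y). If C ⊆ X is antisymmetrically connected, then f(C) is antisymmetrically connected in Y. -/
open Set

/-- Maps continuous for both the forward and backward topologies preserve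
antisymmetric connectedness of subsets. -/
theorem antisymConn_image {X Y : Type*}
    (tpX tmX : TopologicalSpace X) (tpY tmY : TopologicalSpace Y)
    (f : X → Y)
    (hfp : @Continuous X Y tpX tpY f)
    (hfm : @Continuous X Y tmX tmY f)
    (C : Set X) (hC : AntisymConn tpX tmX C) :
    AntisymConn tpY tmY (f '' C) := by
  rintro ⟨H, K, ⟨h0, hH0⟩, ⟨k0, hK0⟩, hdisj, hunion, ⟨O, hO, hHO⟩, ⟨P, hP, hKP⟩⟩
  apply hC
  refine ⟨C ∩ f ⁻¹' O, C ∩ f ⁻¹' P, ?_, ?_, ?_, ?_,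
    ⟨f ⁻¹' O, @Continuous.isOpen_preimage X Y tpX tpY f hfp O hO, rfl⟩, ⟨f ⁻¹' P, @Continuous.isOpen_preimage X Y tmX tmY f hfm P hP, rfl⟩⟩
  · have := hHO ▸ hH0
    obtain ⟨⟨x, hxC, hx⟩, hO'⟩ := this
    exact ⟨x, hxC, by rw [mem_preimage, hx]; exact hO'⟩
  · have := hKP ▸ hK0
    obtain ⟨⟨x, hxC, hx⟩, hP'⟩ := this
    exact ⟨x, hxC, by rw [mem_preimage, hx]; exact hP'⟩
  · rw [disjoint_left]
    rintro x ⟨hxC, hxO⟩ ⟨-, hxP⟩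
    have h1 : f x ∈ H := hHO ▸ ⟨⟨x, hxC, rfl⟩, hxO⟩
    have h2 : f x ∈ K := hKP ▸ ⟨⟨x, hxC, rfl⟩, hxP⟩
    exact disjoint_left.mp hdisj h1 h2
  · ext x
    constructor
    · intro hxC
      have : f x ∈ H ∪ K := hunion ▸ ⟨x, hxC, rfl⟩
      rcases this with h | h
      · exact Or.inl ⟨hxC, (hHO ▸ h).2⟩
      · exact Or.inr ⟨hxC, (hKP ▸ h).2⟩
    · rintro (⟨h, -⟩ | ⟨h, -⟩) <;> exact h
end
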